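/- The Hilbert–Schmidt norm of γ - P, where P is a rank-one projection onto a unit vector φ and γ is a nonnegative trace-class operator of trace 1, satisfies ‖γ - P‖_{HS}² ≤ 2⟨φ, (1 - γ)φ⟩. -/

import Mathlib

open scoped InnerProductSpace

noncomputable section

variable {H : Type*} [NormedAddCommGroup H] [InnerProductSpace ℂ H] [CompleteSpace H]

/-- The rank-one orthogonal projection `|φ⟩⟨φ| : x ↦ ⟪φ, x⟫ φ`. -/
def rankOne (φ : H) : H →L[ℂ] H := (innerSL ℂ φ).smulRight φ

/-- Cauchy–Schwarz for the positive sesquilinear form `(x, y) ↦ ⟪x, γ y⟫`. -/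
lemma pos_cauchy_schwarz (γ : H →L[ℂ] H) (hγ_sa : IsSelfAdjoint γ)
    (hγ_pos : ∀ x : H, 0 ≤ (⟪x, γ x⟫_ℂ).re) (x y : H) :
    ‖⟪x, γ y⟫_ℂ‖ ^ 2 ≤ (⟪x, γ x⟫_ℂ).re * (⟪y, γ y⟫_ℂ).re := by
  have hsa : ∀ u v : H, ⟪γ u, v⟫_ℂ = ⟪u, γ v⟫_ℂ := by
    intro u v
    conv_lhs => rw [← hγ_sa.adjoint_eq]
    exact ContinuousLinearMap.adjoint_inner_left γ v u
  let c : PreInnerProductSpace.Core ℂ H :=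
    { inner := fun u v => ⟪u, γ v⟫_ℂ
      conj_inner_symm := by
        intro u v
        show (starRingEnd ℂ) ⟪v, γ u⟫_ℂ = ⟪u, γ v⟫_ℂ
        rw [inner_conj_symm]
        exact hsa u v
      re_inner_nonneg := hγ_pos
      add_left := by intro u v w; exact inner_add_left u v (γ w)
      smul_left := by intro u v r; exact inner_smul_left u (γ v) r }
  have h := @InnerProductSpace.Core.inner_mul_inner_self_le ℂ H _ _ _ c x y
  have hxy : ‖⟪y, γ x⟫_ℂ‖ = ‖⟪x, γ y⟫_ℂ‖ := by
    rw [← hsa x y, ← inner_conj_symm, RCLike.norm_conj]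
  simp only [RCLike.re_to_complex] at h
  calc ‖⟪x, γ y⟫_ℂ‖ ^ 2 = ‖⟪x, γ y⟫_ℂ‖ * ‖⟪y, γ x⟫_ℂ‖ := by rw [hxy, sq]
    _ ≤ (⟪x, γ x⟫_ℂ).re * (⟪y, γ y⟫_ℂ).re := h

/-- For a unit vector `φ`, `P = |φ⟩⟨φ|`, and a self-adjoint nonnegative
trace-class operator `γ` with `Tr γ = 1`, the Hilbert–Schmidt norm (computed
via any Hilbert basis `b`) satisfies `‖γ - P‖_HS² ≤ 2 (1 - ⟪φ, γ φ⟫)`. -/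
theorem stmt5 {ι : Type*} (b : HilbertBasis ι ℂ H)
    (φ : H) (hφ : ‖φ‖ = 1)
    (γ : H →L[ℂ] H)
    (hγ_sa : IsSelfAdjoint γ)
    (hγ_pos : ∀ x : H, 0 ≤ (⟪x, γ x⟫_ℂ).re)
    (hγ_sum : Summable fun i => (⟪b i, γ (b i)⟫_ℂ).re)
    (hγ_tr : ∑' i, (⟪b i, γ (b i)⟫_ℂ).re = 1) :
    ∑' i, ‖(γ - rankOne φ) (b i)‖ ^ 2 ≤ 2 * (1 - (⟪φ, γ φ⟫_ℂ).re) := by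
  have hsa : ∀ u v : H, ⟪γ u, v⟫_ℂ = ⟪u, γ v⟫_ℂ := by
    intro u v
    conv_lhs => rw [← hγ_sa.adjoint_eq]
    exact ContinuousLinearMap.adjoint_inner_left γ v u
  set d : ι → ℝ := fun i => (⟪b i, γ (b i)⟫_ℂ).re with hd
  have hd_nonneg : ∀ i, 0 ≤ d i := fun i => hγ_pos (b i)
  -- Parseval for `γ (b i)`
  have hPar : ∀ x : H, HasSum (fun j => ‖⟪b j, x⟫_ℂ‖ ^ 2) (‖x‖ ^ 2) := by
    intro x
    have h := Complex.hasSum_re (b.hasSum_inner_mul_inner x x)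
    have heq : ∀ j, (⟪x, b j⟫_ℂ * ⟪b j, x⟫_ℂ).re = ‖⟪b j, x⟫_ℂ‖ ^ 2 := by
      intro j
      rw [← inner_conj_symm x (b j), RCLike.conj_mul]
      norm_cast
    simp only [heq] at h
    have : (⟪x, x⟫_ℂ).re = ‖x‖ ^ 2 := by simpa using inner_self_eq_norm_sq (𝕜 := ℂ) x
    rwa [this] at h
  -- The diagonal of γ² is bounded by d
  have hf_le : ∀ i, ‖γ (b i)‖ ^ 2 ≤ d i := by
    intro i
    have h1 : HasSum (fun j => ‖⟪b j, γ (b i)⟫_ℂ‖ ^ 2) (‖γ (b i)‖ ^ 2) := hPar (γ (b i))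
    have h2 : Summable (fun j => d j * d i) := hγ_sum.mul_right (d i)
    have h3 : ∀ j, ‖⟪b j, γ (b i)⟫_ℂ‖ ^ 2 ≤ d j * d i := fun j =>
      pos_cauchy_schwarz γ hγ_sa hγ_pos (b j) (b i)
    have h4 : ‖γ (b i)‖ ^ 2 ≤ ∑' j, d j * d i := by
      rw [← h1.tsum_eq]
      exact Summable.tsum_le_tsum h3 h1.summable h2
    rwa [tsum_mul_right, hγ_tr, one_mul] at h4
  have hf_sum : Summable (fun i => ‖γ (b i)‖ ^ 2) :=
    Summable.of_nonneg_of_le (fun i => sq_nonneg _) hf_le hγ_sum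
  have hf_tsum_le : ∑' i, ‖γ (b i)‖ ^ 2 ≤ 1 := by
    rw [← hγ_tr]
    exact Summable.tsum_le_tsum hf_le hf_sum hγ_sum
  -- cross and projection terms
  have hg : HasSum (fun i => (⟪φ, b i⟫_ℂ * ⟪b i, γ φ⟫_ℂ).re) (⟪φ, γ φ⟫_ℂ).re :=
    Complex.hasSum_re (b.hasSum_inner_mul_inner φ (γ φ))
  have hh : HasSum (fun i => ‖⟪φ, b i⟫_ℂ‖ ^ 2) 1 := by
    have h := hPar φ
    have : ∀ j, ‖⟪b j, φ⟫_ℂ‖ ^ 2 = ‖⟪φ, b j⟫_ℂ‖ ^ 2 := by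
      intro j; rw [← inner_conj_symm φ (b j), RCLike.norm_conj]
    simp only [this] at h
    rwa [hφ, one_pow] at h
  -- pointwise expansion
  have hpt : ∀ i, ‖(γ - rankOne φ) (b i)‖ ^ 2 =
      ‖γ (b i)‖ ^ 2 - 2 * (⟪φ, b i⟫_ℂ * ⟪b i, γ φ⟫_ℂ).re + ‖⟪φ, b i⟫_ℂ‖ ^ 2 := by
    intro i
    have hP : rankOne φ (b i) = ⟪φ, b i⟫_ℂ • φ := rfl
    have hns : ‖γ (b i) - ⟪φ, b i⟫_ℂ • φ‖ ^ 2 = ‖γ (b i)‖ ^ 2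
        - 2 * (⟪γ (b i), ⟪φ, b i⟫_ℂ • φ⟫_ℂ).re + ‖⟪φ, b i⟫_ℂ • φ‖ ^ 2 := by
      have := norm_sub_sq (𝕜 := ℂ) (γ (b i)) (⟪φ, b i⟫_ℂ • φ)
      simpa only [RCLike.re_to_complex] using this
    have hcross : (⟪γ (b i), ⟪φ, b i⟫_ℂ • φ⟫_ℂ).re = (⟪φ, b i⟫_ℂ * ⟪b i, γ φ⟫_ℂ).re := by
      rw [inner_smul_right, hsa (b i) φ]
    have hnorm : ‖⟪φ, b i⟫_ℂ • φ‖ ^ 2 = ‖⟪φ, b i⟫_ℂ‖ ^ 2 := by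
      rw [norm_smul, hφ, mul_one]
    rw [ContinuousLinearMap.sub_apply, hP, hns, hcross, hnorm]
  have htot : HasSum (fun i => ‖(γ - rankOne φ) (b i)‖ ^ 2)
      ((∑' i, ‖γ (b i)‖ ^ 2) - 2 * (⟪φ, γ φ⟫_ℂ).re + 1) := by
    have := (hf_sum.hasSum.sub (hg.mul_left 2)).add hh
    simpa only [← hpt] using this
  rw [htot.tsum_eq]
  linarith

end
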